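/- Let A be a complete discrete valuation ring with finite residue field k of cardinality q, and let B be a finite étale A-algebra. Then B admits a unique A-algebra endomorphism ψ such that ψ reduces to the q-power Frobenius endomorphism on B ⊗_A k. -/

import Mathlib

open Submodule

lemma aux_pi_smul_mem {A : Type} [CommRing A] (I : Ideal A) {r : ℕ} (k : ℕ) (x : Fin r → A) :
    x ∈ (I ^ k • ⊤ : Submodule A (Fin r → A)) ↔ ∀ i, x i ∈ I ^ k := by
  constructor
  · intro hx
    refine Submodule.smul_induction_on hx (fun c hc m _ i => ?_) (fun y z hy hz i => ?_)
    · exact Ideal.mul_mem_right (m i) _ hc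
    · exact add_mem (hy i) (hz i)
  · intro h
    have hx : ∑ i, x i • (Pi.single i 1 : Fin r → A) = x := by
      funext j
      simp [Finset.sum_apply, Pi.single_apply]
    rw [← hx]
    exact Submodule.sum_mem _ fun i _ => Submodule.smul_mem_smul (h i) trivial

lemma aux_smul_top_self {A : Type} [CommRing A] (I : Ideal A) :
    (I • ⊤ : Submodule A A) = I := by
  rw [Ideal.smul_eq_mul, Ideal.mul_top]

lemma aux_precomplete_pi {A : Type} [CommRing A] (I : Ideal A) [IsPrecomplete I A] (r : ℕ) :
    IsPrecomplete I (Fin r → A) := by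
  constructor
  intro f hf
  have h : ∀ i : Fin r, ∃ L, ∀ n, f n i ≡ L [SMOD (I ^ n • ⊤ : Submodule A A)] := by
    intro i
    apply IsPrecomplete.prec ‹IsPrecomplete I A› (f := fun n => f n i)
    intro m n hmn
    have h1 := (SModEq.sub_mem).mp (hf hmn)
    rw [SModEq.sub_mem]
    have := (aux_pi_smul_mem I m _).mp h1 i
    simpa [aux_smul_top_self] using this
  choose L hL using h
  refine ⟨L, fun n => ?_⟩
  rw [SModEq.sub_mem]
  refine (aux_pi_smul_mem I n _).mpr fun i => ?_
  have := (SModEq.sub_mem).mp (hL i n)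
  simpa [aux_smul_top_self] using this

lemma aux_precomplete_of_surjective {A M N : Type} [CommRing A] [AddCommGroup M] [Module A M]
    [AddCommGroup N] [Module A N] (I : Ideal A) [IsPrecomplete I M]
    (π : M →ₗ[A] N) (hπ : Function.Surjective π) : IsPrecomplete I N := by
  constructor
  intro f hf
  have hmap : ∀ k : ℕ, Submodule.map π (I ^ k • ⊤ : Submodule A M) = (I ^ k • ⊤ : Submodule A N) := by
    intro k
    rw [Submodule.map_smul'', Submodule.map_top, LinearMap.range_eq_top.mpr hπ]
  have hd : ∀ n, ∃ d : M, d ∈ (I ^ n • ⊤ : Submodule A M) ∧ π d = f (n + 1) - f n := by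
    intro n
    have h1 : f (n + 1) - f n ∈ (I ^ n • ⊤ : Submodule A N) := by
      have := (SModEq.sub_mem).mp (hf (Nat.le_succ n))
      simpa using neg_mem this
    rw [← hmap n] at h1
    obtain ⟨d, hd1, hd2⟩ := h1
    exact ⟨d, hd1, hd2⟩
  choose d hd1 hd2 using hd
  obtain ⟨m0, hm0⟩ := hπ (f 0)
  set g : ℕ → M := fun n => m0 + ∑ k ∈ Finset.range n, d k with hg
  have hπg : ∀ n, π (g n) = f n := by
    intro n
    induction n with
    | zero => simp [hg, hm0]
    | succ n ih =>
      rw [hg]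
      simp only [Finset.sum_range_succ, ← add_assoc]
      rw [map_add]
      change π (g n) + _ = _
      rw [ih, hd2]
      abel
  have hgc : ∀ {m n}, m ≤ n → g m ≡ g n [SMOD (I ^ m • ⊤ : Submodule A M)] := by
    intro m n h
    rw [SModEq.sub_mem]
    have hsum : g n - g m = ∑ k ∈ Finset.Ico m n, d k := by
      rw [hg]
      simp only [add_sub_add_left_eq_sub]
      rw [Finset.sum_Ico_eq_sub _ h]
    have hmem : ∑ k ∈ Finset.Ico m n, d k ∈ (I ^ m • ⊤ : Submodule A M) := by
      refine Submodule.sum_mem _ fun k hk => ?_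
      have hmk : m ≤ k := (Finset.mem_Ico.mp hk).1
      exact Submodule.smul_mono_left (Ideal.pow_le_pow_right hmk) (hd1 k)
    have : g m - g n = -(g n - g m) := by abel
    rw [this, hsum]
    exact neg_mem hmem
  obtain ⟨L, hL⟩ := IsPrecomplete.prec ‹IsPrecomplete I M› hgc
  refine ⟨π L, fun n => ?_⟩
  rw [SModEq.sub_mem]
  have h1 : g n - L ∈ (I ^ n • ⊤ : Submodule A M) := (SModEq.sub_mem).mp (hL n)
  have : f n - π L = π (g n - L) := by rw [map_sub, hπg]
  rw [this, ← hmap n]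
  exact Submodule.mem_map_of_mem h1

lemma aux_precomplete_finite {A B : Type} [CommRing A] [CommRing B] [Algebra A B]
    [Module.Finite A B] (I : Ideal A) [IsPrecomplete I A] : IsPrecomplete I B := by
  obtain ⟨r, v, hv⟩ := Module.Finite.exists_fin (R := A) (M := B)
  let π : (Fin r → A) →ₗ[A] B :=
    { toFun := fun c => ∑ i, c i • v i
      map_add' := fun c₁ c₂ => by simp [add_smul, Finset.sum_add_distrib]
      map_smul' := fun a c => by simp [smul_smul, Finset.smul_sum] }
  have hπ : Function.Surjective π := by
    intro b
    have hb : b ∈ Submodule.span A (Set.range v) := by rw [hv]; trivial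
    obtain ⟨c, hc⟩ := (mem_span_range_iff_exists_fun A).mp hb
    exact ⟨c, hc⟩
  haveI := aux_precomplete_pi I r
  exact aux_precomplete_of_surjective I π hπ

/-- Let `A` be a complete discrete valuation ring with finite residue field of
cardinality `q`, and let `B` be a finite étale `A`-algebra.  Then `B` admits a unique `A`-algebra
endomorphism `ψ` reducing to the `q`-power Frobenius modulo the maximal ideal, i.e. with
`ψ(x) ≡ x^q mod 𝔭B` for all `x ∈ B`. -/
theorem stmt9 (A : Type) [CommRing A] [IsDomain A] [IsDiscreteValuationRing A]
    [IsAdicComplete (IsLocalRing.maximalIdeal A) A]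
    [Fintype (IsLocalRing.ResidueField A)]
    (B : Type) [CommRing B] [Algebra A B] [Module.Finite A B] [Algebra.Etale A B] :
    ∃! ψ : B →ₐ[A] B, ∀ x : B,
      ψ x - x ^ Fintype.card (IsLocalRing.ResidueField A) ∈
        Ideal.map (algebraMap A B) (IsLocalRing.maximalIdeal A) := by
  classical
  set I : Ideal A := IsLocalRing.maximalIdeal A with hI
  set J : Ideal B := I.map (algebraMap A B) with hJdef
  set q : ℕ := Fintype.card (IsLocalRing.ResidueField A) with hqdef
  set p : ℕ := ringChar (IsLocalRing.ResidueField A) with hpdef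
  haveI : CharP (IsLocalRing.ResidueField A) p := ringChar.charP _
  have hp : p.Prime := CharP.char_is_prime (IsLocalRing.ResidueField A) p
  obtain ⟨n0, -, hq⟩ := FiniteField.card (IsLocalRing.ResidueField A) p
  rw [← hqdef] at hq
  -- p ∈ I
  have hpA : ((p : ℕ) : A) ∈ I := by
    have h1 : (IsLocalRing.residue A) ((p : ℕ) : A) = 0 := by
      rw [map_natCast]; exact CharP.cast_eq_zero (IsLocalRing.ResidueField A) p
    exact Ideal.Quotient.eq_zero_iff_mem.mp h1
  have hpB : ((p : ℕ) : B) ∈ J := by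
    have : ((p : ℕ) : B) = algebraMap A B ((p : ℕ) : A) := by rw [map_natCast]
    rw [this]; exact Ideal.mem_map_of_mem _ hpA
  have hfa : ∀ a : A, (algebraMap A B a) ^ q - algebraMap A B a ∈ J := by
    intro a
    have h1 : a ^ q - a ∈ I := by
      have h2 : (IsLocalRing.residue A) (a ^ q - a) = 0 := by
        rw [map_sub, map_pow]
        rw [show (IsLocalRing.residue A a) ^ q = IsLocalRing.residue A a from
          FiniteField.pow_card _]
        rw [sub_self]
      exact Ideal.Quotient.eq_zero_iff_mem.mp h2
    simpa [map_sub, map_pow] using Ideal.mem_map_of_mem (algebraMap A B) h1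
  have hadd : ∀ x y : B, (x + y) ^ q - (x ^ q + y ^ q) ∈ J := by
    intro x y
    have hpR : ((p : ℕ) : B ⧸ J) = 0 := by
      rw [← map_natCast (Ideal.Quotient.mk J)]
      exact Ideal.Quotient.eq_zero_iff_mem.mpr hpB
    have key : (Ideal.Quotient.mk J) ((x + y) ^ q) = (Ideal.Quotient.mk J) (x ^ q + y ^ q) := by
      rcases subsingleton_or_nontrivial (B ⧸ J) with hs | hn
      · exact Subsingleton.elim _ _
      · have hd : ringChar (B ⧸ J) ∣ p := ringChar.dvd hpR
        have hcp : ringChar (B ⧸ J) = p := by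
          rcases (Nat.Prime.eq_one_or_self_of_dvd hp _ hd) with h1 | h2
          · exact absurd h1 (CharP.ringChar_ne_one)
          · exact h2
        haveI : CharP (B ⧸ J) p := hcp ▸ ringChar.charP _
        haveI : Fact p.Prime := ⟨hp⟩
        rw [map_pow, map_add, map_add, map_pow, map_pow, hq]
        exact add_pow_char_pow _ _ p (n0 : ℕ)
    exact (Ideal.Quotient.mk_eq_mk_iff_sub_mem _ _).mp key
  have hq0 : q ≠ 0 := Fintype.card_ne_zero
  -- Frobenius on B ⧸ J
  set frob : B →ₐ[A] B ⧸ J :=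
    { toFun := fun x => Ideal.Quotient.mk J (x ^ q)
      map_one' := by rw [one_pow, map_one]
      map_mul' := fun x y => by rw [mul_pow, map_mul]
      map_zero' := by rw [zero_pow hq0, map_zero]
      map_add' := fun x y => by
        rw [← map_add]
        exact (Ideal.Quotient.mk_eq_mk_iff_sub_mem _ _).mpr (hadd x y)
      commutes' := fun a => by
        have : algebraMap A (B ⧸ J) a = Ideal.Quotient.mk J (algebraMap A B a) := rfl
        rw [this]
        exact (Ideal.Quotient.mk_eq_mk_iff_sub_mem _ _).mpr (hfa a) } with hfrob
  -- the tower of quotients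
  set K : ∀ n : ℕ, Ideal (B ⧸ J ^ (n + 1)) :=
    fun n => J.map (Ideal.Quotient.mkₐ A (J ^ (n + 1))) with hKdef
  have hKnil : ∀ n, IsNilpotent (K n) := by
    intro n
    refine ⟨n + 1, ?_⟩
    show (J.map (Ideal.Quotient.mkₐ A (J ^ (n + 1)))) ^ (n + 1) = 0
    rw [← Ideal.map_pow (Ideal.Quotient.mkₐ A (J ^ (n + 1))) J (n + 1)]
    exact Ideal.map_quotient_self _
  have hKle : ∀ n, J ^ (n + 1) ≤ J := fun n => Ideal.pow_le_self (Nat.succ_ne_zero n)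
  set eqv : ∀ n : ℕ, ((B ⧸ J ^ (n + 1)) ⧸ K n) ≃ₐ[A] B ⧸ J := fun n =>
    (DoubleQuot.quotQuotEquivQuotSupₐ A (J ^ (n + 1)) J).trans
      (Ideal.quotientEquivAlgOfEq A (sup_eq_right.mpr (hKle n))) with heqv
  have E1 : ∀ (n : ℕ) (y : B),
      eqv n (Ideal.Quotient.mk (K n) (Ideal.Quotient.mk (J ^ (n + 1)) y))
        = Ideal.Quotient.mk J y := by
    intro n y
    rfl
  set g : ∀ n : ℕ, B →ₐ[A] ((B ⧸ J ^ (n + 1)) ⧸ K n) :=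
    fun n => ((eqv n).symm.toAlgHom).comp frob with hgdef
  have hgx : ∀ (n : ℕ) (x : B), g n x = (eqv n).symm (Ideal.Quotient.mk J (x ^ q)) := by
    intro n x; rfl
  set Φ : ∀ n : ℕ, B →ₐ[A] (B ⧸ J ^ (n + 1)) :=
    fun n => Algebra.FormallySmooth.lift (K n) (hKnil n) (g n) with hΦdef
  have hΦ : ∀ (n : ℕ) (x : B), Ideal.Quotient.mk (K n) (Φ n x) = g n x := by
    intro n x
    exact Algebra.FormallySmooth.mk_lift (K n) (hKnil n) (g n) x
  have mkK_eq : ∀ (n : ℕ) (y x : B),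
      Ideal.Quotient.mk (K n) (Ideal.Quotient.mk (J ^ (n + 1)) y) = g n x ↔ y - x ^ q ∈ J := by
    intro n y x
    rw [hgx]
    constructor
    · intro h
      have h2 := congrArg (eqv n) h
      rw [E1, AlgEquiv.apply_symm_apply] at h2
      exact (Ideal.Quotient.mk_eq_mk_iff_sub_mem _ _).mp h2
    · intro h
      apply (eqv n).injective
      rw [E1, AlgEquiv.apply_symm_apply]
      exact (Ideal.Quotient.mk_eq_mk_iff_sub_mem _ _).mpr h
  have U : ∀ (n : ℕ) (φ : B →ₐ[A] (B ⧸ J ^ (n + 1))),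
      (∀ x, Ideal.Quotient.mk (K n) (φ x) = g n x) → φ = Φ n := by
    intro n φ h
    exact Algebra.FormallyUnramified.ext (K n) (hKnil n) fun x => (h x).trans (hΦ n x).symm
  have L2 : ∀ (φ : B →ₐ[A] B), (∀ x, φ x - x ^ q ∈ J) →
      ∀ (n : ℕ) (x : B), Ideal.Quotient.mk (J ^ (n + 1)) (φ x) = Φ n x := by
    intro φ hφ n x
    have h1 : (Ideal.Quotient.mkₐ A (J ^ (n + 1))).comp φ = Φ n :=
      U n _ fun x => (mkK_eq n (φ x) x).mpr (hφ x)
    exact AlgHom.congr_fun h1 x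
  set ρ : ∀ n : ℕ, (B ⧸ J ^ (n + 2)) →ₐ[A] (B ⧸ J ^ (n + 1)) := fun n =>
    Ideal.quotientMapₐ (J ^ (n + 1)) (AlgHom.id A B)
      (fun b hb => Ideal.pow_le_pow_right (Nat.le_succ (n + 1)) hb) with hρdef
  have ρ_mk : ∀ (n : ℕ) (y : B),
      ρ n (Ideal.Quotient.mk (J ^ (n + 2)) y) = Ideal.Quotient.mk (J ^ (n + 1)) y := by
    intro n y; rfl
  have L3 : ∀ n : ℕ, (ρ n).comp (Φ (n + 1)) = Φ n := by
    intro n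
    apply U n
    intro x
    obtain ⟨y, hy⟩ := Ideal.Quotient.mk_surjective (I := J ^ (n + 2)) (Φ (n + 1) x)
    have h1 : y - x ^ q ∈ J := (mkK_eq (n + 1) y x).mp (by rw [hy]; exact hΦ (n + 1) x)
    rw [AlgHom.comp_apply, ← hy, ρ_mk]
    exact (mkK_eq n y x).mpr h1
  -- completeness of B
  have hsm : ∀ (n : ℕ) (b : B), b ∈ (I ^ n • ⊤ : Submodule A B) ↔ b ∈ J ^ n := by
    intro n b
    rw [Ideal.smul_top_eq_map, Ideal.map_pow]
    exact Iff.rfl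
  haveI hpre : IsPrecomplete I B := aux_precomplete_finite I
  have hlim : ∀ x : B, ∃ L : B, ∀ n, Ideal.Quotient.mk (J ^ (n + 1)) L = Φ n x := by
    intro x
    choose t ht using fun n => Ideal.Quotient.mk_surjective (I := J ^ (n + 1)) (Φ n x)
    have htt : ∀ n, Ideal.Quotient.mk (J ^ (n + 1)) (t (n + 1)) = Φ n x := by
      intro n
      rw [← ρ_mk n, ht (n + 1)]
      exact AlgHom.congr_fun (L3 n) x
    have hcons : ∀ n, t n - t (n + 1) ∈ (J ^ (n + 1) : Ideal B) :=
      fun n => (Ideal.Quotient.mk_eq_mk_iff_sub_mem _ _).mp ((ht n).trans (htt n).symm)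
    have hc : ∀ {m n}, m ≤ n → t m ≡ t n [SMOD (I ^ m • ⊤ : Submodule A B)] := by
      intro m n h
      induction n, h using Nat.le_induction with
      | base => exact SModEq.refl _
      | succ n hmn ih =>
        refine ih.trans ?_
        rw [SModEq.sub_mem]
        exact (hsm m _).mpr (Ideal.pow_le_pow_right (by omega) (hcons n))
    obtain ⟨L, hL⟩ := IsPrecomplete.prec hpre hc
    refine ⟨L, fun n => ?_⟩
    have h1 : t (n + 1) - L ∈ (J ^ (n + 1) : Ideal B) :=
      (hsm (n + 1) _).mp ((SModEq.sub_mem).mp (hL (n + 1)))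
    rw [← htt n]
    exact ((Ideal.Quotient.mk_eq_mk_iff_sub_mem _ _).mpr h1).symm
  choose Ψ hΨ using hlim
  -- Hausdorff property
  have hH : ∀ b : B, (∀ n, b ∈ (J ^ (n + 1) : Ideal B)) → b = 0 := by
    intro b hb
    have h1 : b ∈ (⨅ n : ℕ, (I ^ n • ⊤ : Submodule A B)) := by
      rw [Submodule.mem_iInf]
      intro n
      exact (hsm n b).mpr (Ideal.pow_le_pow_right (Nat.le_succ n) (hb n))
    rw [Ideal.iInf_pow_smul_eq_bot_of_isLocalRing I
      (Ideal.IsMaximal.ne_top (IsLocalRing.maximalIdeal.isMaximal A))] at h1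
    simpa using h1
  have hsub : ∀ b c : B,
      (∀ n, Ideal.Quotient.mk (J ^ (n + 1)) b = Ideal.Quotient.mk (J ^ (n + 1)) c) → b = c := by
    intro b c h
    have := hH (b - c) fun n => (Ideal.Quotient.mk_eq_mk_iff_sub_mem _ _).mp (h n)
    exact sub_eq_zero.mp this
  set ψ : B →ₐ[A] B :=
    { toFun := Ψ
      map_one' := hsub _ _ fun n => by rw [hΨ 1 n, map_one, map_one]
      map_mul' := fun x y => hsub _ _ fun n => by
        rw [hΨ (x * y) n, map_mul, map_mul (Ideal.Quotient.mk _), hΨ x n, hΨ y n]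
      map_zero' := hsub _ _ fun n => by rw [hΨ 0 n, map_zero, map_zero]
      map_add' := fun x y => hsub _ _ fun n => by
        rw [hΨ (x + y) n, map_add, map_add (Ideal.Quotient.mk _), hΨ x n, hΨ y n]
      commutes' := fun a => hsub _ _ fun n => by
        rw [hΨ _ n, AlgHom.commutes]
        rfl } with hψdef
  have hprop : ∀ x : B, ψ x - x ^ q ∈ J := by
    intro x
    exact (mkK_eq 0 (Ψ x) x).mp (by rw [hΨ x 0]; exact hΦ 0 x)
  have huniq : ∀ ψ' : B →ₐ[A] B, (∀ x, ψ' x - x ^ q ∈ J) → ψ' = ψ := by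
    intro ψ' hψ'
    refine AlgHom.ext fun x => hsub _ _ fun n => ?_
    rw [L2 ψ' hψ' n x]
    exact (hΨ x n).symm
  exact ⟨ψ, hprop, huniq⟩
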